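/- A reciprocal-differences model is unique up to a positive linear-quadratic transformation: if (u,λ) and (u',λ') are reciprocal-differences representations of the same random non-forced choice model ρ on X (with |X| ≥ 2), then they coincide as representations if and only if there exists α > 0 such that u' = α·u and λ' = α²·λ. -/

import Mathlib

/-- A reciprocal-differences model is unique up to a positive linear-quadratic
transformation: `(u,λ)` and `(u',λ')` represent the same random non-forced choice model
iff `u' = α·u` and `λ' = α²·λ` for some `α > 0`. -/
theorem stmt17 {X : Type*} [Fintype X] [DecidableEq X] (hX : 1 < Fintype.card X)
    (u u' : X → ℝ) (l l' : ℝ)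
    (hu : ∀ a, 0 < u a) (hu' : ∀ a, 0 < u' a)
    (hui : Function.Injective u) (hui' : Function.Injective u')
    (hl : 0 < l) (hl' : 0 < l') :
    (∀ a b : X, a ≠ b →
        u a / (u a + u b + l / |u a - u b|)
          = u' a / (u' a + u' b + l' / |u' a - u' b|))
      ↔ ∃ α > 0, (∀ a, u' a = α * u a) ∧ l' = α ^ 2 * l := by
  have hD : ∀ a b : X, a ≠ b → 0 < u a + u b + l / |u a - u b| := by
    intro a b hab
    have h1 : u a ≠ u b := fun h => hab (hui h)
    have h2 : 0 < |u a - u b| := abs_pos.mpr (sub_ne_zero.mpr h1)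
    have := hu a; have := hu b
    positivity
  have hD' : ∀ a b : X, a ≠ b → 0 < u' a + u' b + l' / |u' a - u' b| := by
    intro a b hab
    have h1 : u' a ≠ u' b := fun h => hab (hui' h)
    have h2 : 0 < |u' a - u' b| := abs_pos.mpr (sub_ne_zero.mpr h1)
    have := hu' a; have := hu' b
    positivity
  constructor
  · intro h
    obtain ⟨a0, b0, hab0⟩ := Fintype.exists_pair_of_one_lt_card hX
    set α := u' a0 / u a0 with hα
    have hαpos : 0 < α := div_pos (hu' a0) (hu a0)
    have key : ∀ a b : X, a ≠ b → u' a * u b = u a * u' b := by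
      intro a b hab
      have h1 := h a b hab
      have h2 := h b a hab.symm
      have e1 : u b + u a + l / |u b - u a| = u a + u b + l / |u a - u b| := by
        rw [abs_sub_comm]; ring
      have e2 : u' b + u' a + l' / |u' b - u' a| = u' a + u' b + l' / |u' a - u' b| := by
        rw [abs_sub_comm]; ring
      rw [e1, e2] at h2
      have hDab := hD a b hab
      have hD'ab := hD' a b hab
      rw [div_eq_div_iff hDab.ne' hD'ab.ne'] at h1 h2
      have hub := (hu b).ne'
      have hub' := (hu' b).ne'
      nlinarith [mul_pos hDab hD'ab, hu a, hu b, hu' a, hu' b,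
        mul_pos (hu b) hD'ab]
    have hscale : ∀ a, u' a = α * u a := by
      intro a
      by_cases ha : a = a0
      · subst ha
        rw [hα]
        exact (div_mul_cancel₀ _ (hu a).ne').symm
      · have hk := key a a0 ha
        rw [hα, div_mul_eq_mul_div, eq_div_iff (hu a0).ne']
        linarith [hk]
    refine ⟨α, hαpos, hscale, ?_⟩
    have h1 := h a0 b0 hab0
    have hune : u a0 ≠ u b0 := fun hh => hab0 (hui hh)
    have hΔ : 0 < |u a0 - u b0| := abs_pos.mpr (sub_ne_zero.mpr hune)
    have habs : |α * u a0 - α * u b0| = α * |u a0 - u b0| := by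
      rw [← mul_sub, abs_mul, abs_of_pos hαpos]
    rw [hscale a0, hscale b0, habs] at h1
    have hDab := hD a0 b0 hab0
    have hD'ab : 0 < α * u a0 + α * u b0 + l' / (α * |u a0 - u b0|) := by
      have := hu a0; have := hu b0
      positivity
    rw [div_eq_div_iff hDab.ne' hD'ab.ne'] at h1
    field_simp at h1
    nlinarith [h1, mul_pos (hu a0) hΔ, hαpos, hΔ]
  · rintro ⟨α, hαpos, hueq, hleq⟩
    intro a b hab
    have hune : u a ≠ u b := fun hh => hab (hui hh)
    have hΔ : 0 < |u a - u b| := abs_pos.mpr (sub_ne_zero.mpr hune)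
    have habs : |α * u a - α * u b| = α * |u a - u b| := by
      rw [← mul_sub, abs_mul, abs_of_pos hαpos]
    rw [hueq a, hueq b, hleq, habs]
    have hden : α * u a + α * u b + α ^ 2 * l / (α * |u a - u b|)
        = α * (u a + u b + l / |u a - u b|) := by
      field_simp
    rw [hden, mul_div_mul_left _ _ hαpos.ne']
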